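/- Let the cookie-environment assumptions (A1)–(A3) hold with δ > 1, and fix γ ∈ (0, 1/2). Then P_V(Σ_{i=0}^{⌊n^γ⌋−1} V_i > n/5) = o(n^{2γ−(1+δ)/2}) as n → ∞, where P_V is the law of the backward branching process started at V_0 = 0. -/

import Mathlib

open Filter Finset
open scoped ENNReal NNReal

noncomputable section

/-- Number of `true`s among the first `m` values of the Boolean sequence `b`
(i.e. `#{1 ≤ j ≤ m : B_j = 1}` with 0-based indexing). -/
def countTrue (b : ℕ → Bool) (m : ℕ) : ℕ := ((Finset.range m).filter fun j => b j = true).card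

/-- Number of `false`s among the first `m` values of the Boolean sequence `b`. -/
def countFalse (b : ℕ → Bool) (m : ℕ) : ℕ := ((Finset.range m).filter fun j => b j = false).card

/-- The left forward branching process `Z` driven by the Bernoulli field `b`,
with initial condition `Z_0 = z`:
`Z_i = inf{m ≥ 0 : Σ_{j=1}^m B_{-i,j} = Z_{i-1}} - Z_{i-1}` for `i ≥ 1`. -/
def leftBP (b : ℤ → ℕ → Bool) (z : ℕ) : ℕ → ℕ
  | 0 => z
  | i + 1 => sInf {m : ℕ | countTrue (b (-((i : ℤ) + 1))) m = leftBP b z i} - leftBP b z i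

/-- The right forward branching process `W` driven by the Bernoulli field `b`,
with initial condition `W_0 = w`:
`W_i = inf{m ≥ 0 : Σ_{j=1}^m (1 - B_{i,j}) = W_{i-1}} - W_{i-1}` for `i ≥ 1`. -/
def rightBP (b : ℤ → ℕ → Bool) (w : ℕ) : ℕ → ℕ
  | 0 => w
  | i + 1 => sInf {m : ℕ | countFalse (b ((i : ℤ) + 1)) m = rightBP b w i} - rightBP b w i

/-- The backward branching process `V` driven by the Bernoulli field `b`,
with initial condition `V_0 = v`:
`V_{i+1} = inf{m ≥ 0 : Σ_{j=1}^m B_{i,j} = V_i + 1} - V_i - 1`. -/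
def backBP (b : ℤ → ℕ → Bool) (v : ℕ) : ℕ → ℕ
  | 0 => v
  | i + 1 => sInf {m : ℕ | countTrue (b (i : ℤ)) m = backBP b v i + 1} - (backBP b v i + 1)

/-- `τ_x^ξ = inf{t : ξ_t ≥ x}`, the first time the process `ξ` is above level `x`
(`= ∞` if there is no such time). -/
def tauAbove (ξ : ℕ → ℕ) (x : ℝ) : ℕ∞ := sInf {t : ℕ∞ | ∃ k : ℕ, t = k ∧ x ≤ (ξ k : ℝ)}

/-- `σ_x^ξ = inf{t : ξ_t ≤ x}`, the first time the process `ξ` is below level `x`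
(`= ∞` if there is no such time). -/
def sigmaBelow (ξ : ℕ → ℕ) (x : ℝ) : ℕ∞ := sInf {t : ℕ∞ | ∃ k : ℕ, t = k ∧ (ξ k : ℝ) ≤ x}

/-- A setup for a one-dimensional excited random walk in an i.i.d. cookie environment with
at most `M` cookies per site, satisfying assumptions (A1)-(A3), together with the auxiliary
Bernoulli random variables `B_{x,j}` (which, conditionally on the cookie environment, are
independent with `B_{x,j} ~ Bernoulli(ω(x,j))`) and the walk `X` constructed from them.
Cookie indices are 0-based: `cookie ω x j` is the cookie used on the `(j+1)`-th visit to `x`. -/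
structure ERWSetup where
  /-- the underlying sample space -/
  Ω : Type
  [mΩ : MeasurableSpace Ω]
  /-- the (averaged) probability measure -/
  μ : MeasureTheory.Measure Ω
  isProb : MeasureTheory.IsProbabilityMeasure μ
  /-- the number of cookies per site -/
  M : ℕ
  /-- the random cookie environment -/
  cookie : Ω → ℤ → ℕ → ℝ
  /-- the auxiliary Bernoulli random variables -/
  B : Ω → ℤ → ℕ → Bool
  /-- the excited random walk -/
  X : ℕ → Ω → ℤ
  meas_cookie : Measurable cookie
  meas_B : Measurable B
  meas_X : ∀ n, Measurable (X n)
  cookie_mem : ∀ ω x j, cookie ω x j ∈ Set.Icc (0 : ℝ) 1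
  /-- (A1): almost surely, all cookies beyond the first `M` at each site equal `1/2` -/
  A1 : ∀ᵐ ω ∂μ, ∀ (x : ℤ) (j : ℕ), M ≤ j → cookie ω x j = 1 / 2
  /-- (A2): the cookie stacks at distinct sites are independent -/
  A2_indep : ProbabilityTheory.iIndepFun (fun x ω => cookie ω x) μ
  /-- (A2): the cookie stacks at distinct sites are identically distributed -/
  A2_ident : ∀ x y : ℤ,
    ProbabilityTheory.IdentDistrib (fun ω => cookie ω x) (fun ω => cookie ω y) μ μ
  /-- (A3), positive part -/
  A3_pos : 0 < ∫ ω, ∏ j ∈ Finset.range M, cookie ω 0 j ∂μ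
  /-- (A3), negative part -/
  A3_neg : 0 < ∫ ω, ∏ j ∈ Finset.range M, (1 - cookie ω 0 j) ∂μ
  /-- conditionally on the cookie environment, the `B_{x,j}` are independent with
  `B_{x,j} ~ Bernoulli(ω(x,j))` (stated via conditional expectations given the σ-algebra
  generated by the environment) -/
  condB : ∀ (s : Finset (ℤ × ℕ)) (bv : ℤ × ℕ → Bool),
    (MeasureTheory.condExp (MeasurableSpace.comap cookie inferInstance) μ
        (fun ω => if ∀ p ∈ s, B ω p.1 p.2 = bv p then (1 : ℝ) else 0))
      =ᵐ[μ] fun ω => ∏ p ∈ s, (if bv p then cookie ω p.1 p.2 else 1 - cookie ω p.1 p.2)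
  /-- the walk starts at the origin -/
  X_zero : ∀ ω, X 0 ω = 0
  /-- on the `j`-th visit to a site `x`, the walk steps right if `B_{x,j} = 1`
  and left if `B_{x,j} = 0` -/
  X_step : ∀ ω n, X (n + 1) ω = X n ω +
    (if B ω (X n ω) (((Finset.range (n + 1)).filter fun k => X k ω = X n ω).card - 1)
      then 1 else -1)

attribute [instance] ERWSetup.mΩ

open MeasureTheory ProbabilityTheory

namespace ERWSetup

variable (S : ERWSetup)

/-- the parameter `δ = E[Σ_j (2ω(0,j) - 1)]` -/
def delta : ℝ := ∫ ω, ∑' j : ℕ, (2 * S.cookie ω 0 j - 1) ∂S.μ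

/-- `T_m = inf{k ≥ 0 : X_k = m}`, the hitting time of the site `m` by the walk
(`= ∞` if `m` is never visited). -/
def T (m : ℤ) (ω : S.Ω) : ℕ∞ := sInf {t : ℕ∞ | ∃ k : ℕ, t = k ∧ S.X k ω = m}

/-- `ρ_k`, the time of the `k`-th return of the walk to the origin. -/
def ret : ℕ → S.Ω → ℕ∞
  | 0, _ => 0
  | k + 1, ω => sInf {t : ℕ∞ | ∃ j : ℕ, t = j ∧ ret k ω < (j : ℕ∞) ∧ S.X j ω = 0}

/-- `U_x^n = #{k ≤ n : X_{k-1} = x, X_k = x+1}`, the number of steps to the right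
from `x` in the first `n` steps. -/
def U (x : ℤ) (n : ℕ) (ω : S.Ω) : ℕ :=
  ((Finset.Icc 1 n).filter fun k => S.X (k - 1) ω = x ∧ S.X k ω = x + 1).card

/-- `D_x^n = #{k ≤ n : X_{k-1} = x, X_k = x-1}`, the number of steps to the left
from `x` in the first `n` steps. -/
def D (x : ℤ) (n : ℕ) (ω : S.Ω) : ℕ :=
  ((Finset.Icc 1 n).filter fun k => S.X (k - 1) ω = x ∧ S.X k ω = x - 1).card

/-- `R_n = Σ_{j=1}^n B_{0,j}` -/
def R (n : ℕ) (ω : S.Ω) : ℕ := countTrue (S.B ω 0) n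

/-- `L_n(x) = #{k < n : X_k = x}`, the local time of the walk at `x` before time `n`. -/
def L (n : ℕ) (x : ℤ) (ω : S.Ω) : ℕ := ((Finset.range n).filter fun k => S.X k ω = x).card

/-- `r_1^V = inf{i > 0 : V_i = 0}`, the first return to `0` of the backward branching
process started at `V_0 = 0`. -/
def r1 (ω : S.Ω) : ℕ∞ := sInf {t : ℕ∞ | ∃ k : ℕ, t = k ∧ 0 < k ∧ backBP (S.B ω) 0 k = 0}

/-- `S_1^V = Σ_{i=0}^{r_1^V - 1} V_i`, the total progeny of the backward branching process
(started at `V_0 = 0`) before its first return to `0`. -/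
def S1 (ω : S.Ω) : ℝ≥0∞ := ∑' i : ℕ, if (i : ℕ∞) < S.r1 ω then (backBP (S.B ω) 0 i : ℝ≥0∞) else 0

/-- `r̄ = E_V[r_1^V]`, the mean return time to `0` of the backward branching process. -/
def rbar : ℝ := (∫⁻ ω, (S.r1 ω : ℝ≥0∞) ∂S.μ).toReal

end ERWSetup
open MeasureTheory ProbabilityTheory


namespace ERWAux

lemma countTrue_zero (b : ℕ → Bool) : countTrue b 0 = 0 := by simp [countTrue]

lemma countTrue_succ (b : ℕ → Bool) (m : ℕ) :
    countTrue b (m + 1) = countTrue b m + (if b m = true then 1 else 0) := by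
  unfold countTrue
  rw [Finset.range_add_one, Finset.filter_insert]
  split_ifs with h
  · rw [Finset.card_insert_of_notMem (by simp)]
  · simp

lemma countTrue_le (b : ℕ → Bool) (m : ℕ) : countTrue b m ≤ m := by
  simpa [countTrue] using Finset.card_filter_le (Finset.range m) (fun j => b j = true)

lemma countTrue_mono (b : ℕ → Bool) {m m' : ℕ} (h : m ≤ m') : countTrue b m ≤ countTrue b m' := by
  exact Finset.card_le_card (Finset.filter_subset_filter _ (Finset.range_subset_range.2 h))

lemma countTrue_bounded_of_not_exists {b : ℕ → Bool} {v : ℕ}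
    (h : ¬ ∃ m, countTrue b m = v + 1) : ∀ m, countTrue b m ≤ v := by
  intro m
  induction m with
  | zero => simp [countTrue_zero]
  | succ m ih =>
      rcases Nat.lt_or_ge (countTrue b m) v with h1 | h1
      · have := countTrue_succ b m
        split_ifs at this <;> omega
      · have hm : countTrue b m = v := le_antisymm ih h1
        have h2 := countTrue_succ b m
        by_contra hc
        apply h
        exact ⟨m + 1, by split_ifs at h2 <;> omega⟩

lemma eventually_false_of_bounded {b : ℕ → Bool} {v : ℕ}
    (h : ∀ m, countTrue b m ≤ v) : ∃ L, ∀ j, L ≤ j → b j = false := by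
  by_contra hc
  push_neg at hc
  have key : ∀ t : ℕ, ∃ m, t ≤ countTrue b m := by
    intro t
    induction t with
    | zero => exact ⟨0, Nat.zero_le _⟩
    | succ t ih =>
        obtain ⟨m, hm⟩ := ih
        obtain ⟨j, hj, hbj⟩ := hc m
        have hbj' : b j = true := by
          cases hb : b j
          · exact absurd hb hbj
          · rfl
        refine ⟨j + 1, ?_⟩
        have := countTrue_succ b j
        have hmono := countTrue_mono b hj
        rw [if_pos hbj'] at this
        omega
  obtain ⟨m, hm⟩ := key (v + 1)
  exact absurd (h m) (by omega)

/-- the key deterministic step structure lemma -/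
lemma step_pattern {b : ℕ → Bool} {v : ℕ} (hne : ∃ m, countTrue b m = v + 1) :
    countTrue b (v + (sInf {m | countTrue b m = v + 1} - (v + 1)) + 1) = v + 1 ∧
      b (v + (sInf {m | countTrue b m = v + 1} - (v + 1))) = true := by
  set S := {m | countTrue b m = v + 1} with hS
  have hSne : S.Nonempty := hne
  have hmem : sInf S ∈ S := Nat.sInf_mem hSne
  have hct : countTrue b (sInf S) = v + 1 := hmem
  have hge : v + 1 ≤ sInf S := le_trans (le_of_eq hct.symm) (countTrue_le b _)
  have hpos : 1 ≤ sInf S := le_trans (Nat.le_add_left 1 v) hge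
  obtain ⟨m₁, hm₁⟩ : ∃ m₁, sInf S = m₁ + 1 := ⟨sInf S - 1, by omega⟩
  have hlt : m₁ < sInf S := by omega
  have hnot' : m₁ ∉ S := Nat.notMem_of_lt_sInf hlt
  have hnot : countTrue b m₁ ≠ v + 1 := hnot'
  have hsucc := countTrue_succ b m₁
  rw [hm₁] at hct
  have hb : b m₁ = true := by
    by_contra hbf
    rw [if_neg hbf] at hsucc
    omega
  have hpos_eq : v + (sInf S - (v + 1)) + 1 = sInf S := by omega
  have hpos_eq' : v + (sInf S - (v + 1)) = m₁ := by omega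
  constructor
  · rw [hpos_eq, hm₁]; exact hct
  · rw [hpos_eq']; exact hb

end ERWAux

namespace ERWAux

def shift (η : ℕ → ℝ) : ℕ → ℝ := fun j => η (j + 1)

noncomputable def rterm (η : ℕ → ℝ) (T : Finset ℕ) (j : ℕ) : ℝ≥0∞ :=
  ENNReal.ofReal (if j ∈ T then 1 - η j else η j)

/-- sum over all coin patterns realizing a row transition `v → w`
(patterns with `v+1` trues and `w` falses, ending with a true) of the product
of the corresponding (conditional) probabilities. -/
noncomputable def G (η : ℕ → ℝ) (v w : ℕ) : ℝ≥0∞ :=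
  ∑ T ∈ (Finset.range (v + w)).powersetCard w,
    ∏ j ∈ Finset.range (v + w + 1), rterm η T j

lemma G_v_zero (η : ℕ → ℝ) (v : ℕ) :
    G η v 0 = ∏ j ∈ Finset.range (v + 1), ENNReal.ofReal (η j) := by
  unfold G
  rw [Finset.powersetCard_zero, Finset.sum_singleton]
  exact Finset.prod_congr rfl fun j _ => by simp [rterm]

lemma G_zero_succ (η : ℕ → ℝ) (w : ℕ) :
    G η 0 (w + 1) = ENNReal.ofReal (1 - η 0) * G (shift η) 0 w := by
  unfold G
  have h1 : (Finset.range (0 + (w + 1))).powersetCard (w + 1) = {Finset.range (w + 1)} := by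
    rw [Nat.zero_add]
    have := Finset.powersetCard_self (Finset.range (w + 1))
    rwa [Finset.card_range] at this
  have h2 : (Finset.range (0 + w)).powersetCard w = {Finset.range w} := by
    rw [Nat.zero_add]
    have := Finset.powersetCard_self (Finset.range w)
    rwa [Finset.card_range] at this
  rw [h1, h2, Finset.sum_singleton, Finset.sum_singleton]
  have h3 : (0 : ℕ) + (w + 1) + 1 = (w + 1) + 1 := by ring
  have h4 : (0 : ℕ) + w + 1 = w + 1 := by ring
  rw [h3, h4, Finset.prod_range_succ']
  have h5 : ∀ j ∈ Finset.range (w + 1),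
      rterm η (Finset.range (w + 1)) (j + 1) = rterm (shift η) (Finset.range w) j := by
    intro j hj
    have hj' : j < w + 1 := Finset.mem_range.mp hj
    simp only [rterm, shift]
    by_cases h : j < w
    · rw [if_pos (Finset.mem_range.mpr (by omega)), if_pos (Finset.mem_range.mpr h)]
    · have hA1 : j + 1 ∉ Finset.range (w + 1) := by
        simp only [Finset.mem_range]; omega
      have hA2 : j ∉ Finset.range w := by
        simp only [Finset.mem_range]; omega
      rw [if_neg hA1, if_neg hA2]
  rw [Finset.prod_congr rfl h5]
  have h6 : rterm η (Finset.range (w + 1)) 0 = ENNReal.ofReal (1 - η 0) := by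
    simp [rterm]
  rw [h6, mul_comm]

lemma G_succ_succ (η : ℕ → ℝ) (v w : ℕ) :
    G η (v + 1) (w + 1) =
      ENNReal.ofReal (η 0) * G (shift η) v (w + 1) +
        ENNReal.ofReal (1 - η 0) * G (shift η) (v + 1) w := by
  have hn : v + 1 + (w + 1) = v + w + 2 := by ring
  have hn2 : v + (w + 1) = v + w + 1 := by ring
  have hn3 : v + 1 + w = v + w + 1 := by ring
  unfold G
  rw [hn, hn2, hn3]
  rw [← Finset.sum_filter_add_sum_filter_not
    ((Finset.range (v + w + 2)).powersetCard (w + 1)) (fun T => 0 ∈ T)]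
  have hB : ∑ T ∈ ((Finset.range (v + w + 2)).powersetCard (w + 1)).filter (fun T => ¬ 0 ∈ T),
      ∏ j ∈ Finset.range (v + w + 2 + 1), rterm η T j
      = ENNReal.ofReal (η 0) * ∑ U ∈ (Finset.range (v + w + 1)).powersetCard (w + 1),
          ∏ j ∈ Finset.range (v + w + 1 + 1), rterm (shift η) U j := by
    rw [Finset.mul_sum]
    refine Finset.sum_nbij' (i := fun T => T.image (· - 1)) (j := fun U => U.image (· + 1))
      ?_ ?_ ?_ ?_ ?_
    · intro T hT
      simp only [Finset.mem_filter, Finset.mem_powersetCard] at hT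
      obtain ⟨⟨hsub, hcard⟩, h0⟩ := hT
      rw [Finset.mem_powersetCard]
      constructor
      · intro a ha
        simp only [Finset.mem_image] at ha
        obtain ⟨b, hb, rfl⟩ := ha
        have hb1 : b ≠ 0 := fun h => h0 (h ▸ hb)
        have := Finset.mem_range.mp (hsub hb)
        exact Finset.mem_range.mpr (by omega)
      · rw [Finset.card_image_of_injOn (fun a ha b hb hab => by
          simp only [Finset.mem_coe] at ha hb
          have ha1 : a ≠ 0 := fun h => h0 (h ▸ ha)
          have hb1 : b ≠ 0 := fun h => h0 (h ▸ hb)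
          omega), hcard]
    · intro U hU
      rw [Finset.mem_powersetCard] at hU
      obtain ⟨hsub, hcard⟩ := hU
      simp only [Finset.mem_filter, Finset.mem_powersetCard]
      refine ⟨⟨?_, ?_⟩, ?_⟩
      · intro a ha
        simp only [Finset.mem_image] at ha
        obtain ⟨b, hb, rfl⟩ := ha
        have := Finset.mem_range.mp (hsub hb)
        exact Finset.mem_range.mpr (by omega)
      · rw [Finset.card_image_of_injective _ (fun a b h => by omega), hcard]
      · simp only [Finset.mem_image]
        rintro ⟨b, _, h⟩
        omega
    · intro T hT
      simp only [Finset.mem_filter] at hT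
      ext a
      simp only [Finset.mem_image]
      constructor
      · rintro ⟨b, ⟨c, hc, rfl⟩, rfl⟩
        have hc1 : c ≠ 0 := fun h => hT.2 (h ▸ hc)
        have : c - 1 + 1 = c := by omega
        rwa [this]
      · intro ha
        have ha1 : a ≠ 0 := fun h => hT.2 (h ▸ ha)
        exact ⟨a - 1, ⟨a, ha, rfl⟩, by omega⟩
    · intro U hU
      ext a
      simp only [Finset.mem_image]
      constructor
      · rintro ⟨b, ⟨c, hc, rfl⟩, rfl⟩
        simpa [Nat.add_sub_cancel] using hc
      · intro ha
        exact ⟨a + 1, ⟨a, ha, rfl⟩, by omega⟩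
    · intro T hT
      simp only [Finset.mem_filter] at hT
      rw [Finset.prod_range_succ']
      have h0 : rterm η T 0 = ENNReal.ofReal (η 0) := by
        simp [rterm, hT.2]
      rw [h0, mul_comm]
      congr 1
      refine Finset.prod_congr rfl fun j _ => ?_
      simp only [rterm, shift]
      congr 1
      have : j + 1 ∈ T ↔ j ∈ T.image (· - 1) := by
        simp only [Finset.mem_image]
        constructor
        · intro h; exact ⟨j + 1, h, by omega⟩
        · rintro ⟨b, hb, rfl⟩
          have hb1 : b ≠ 0 := fun h => hT.2 (h ▸ hb)
          have : b - 1 + 1 = b := by omega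
          rwa [this]
      by_cases h : j + 1 ∈ T
      · rw [if_pos h, if_pos (this.mp h)]
      · rw [if_neg h, if_neg (fun hc => h (this.mpr hc))]
  have hA : ∑ T ∈ ((Finset.range (v + w + 2)).powersetCard (w + 1)).filter (fun T => 0 ∈ T),
      ∏ j ∈ Finset.range (v + w + 2 + 1), rterm η T j
      = ENNReal.ofReal (1 - η 0) * ∑ U ∈ (Finset.range (v + w + 1)).powersetCard w,
          ∏ j ∈ Finset.range (v + w + 1 + 1), rterm (shift η) U j := by
    rw [Finset.mul_sum]
    refine Finset.sum_nbij' (i := fun T => (T.erase 0).image (· - 1))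
      (j := fun U => insert 0 (U.image (· + 1))) ?_ ?_ ?_ ?_ ?_
    · intro T hT
      simp only [Finset.mem_filter, Finset.mem_powersetCard] at hT
      obtain ⟨⟨hsub, hcard⟩, h0⟩ := hT
      rw [Finset.mem_powersetCard]
      constructor
      · intro a ha
        simp only [Finset.mem_image, Finset.mem_erase] at ha
        obtain ⟨b, ⟨hb0, hb⟩, rfl⟩ := ha
        have := Finset.mem_range.mp (hsub hb)
        exact Finset.mem_range.mpr (by omega)
      · rw [Finset.card_image_of_injOn (fun a ha b hb hab => by
          simp only [Finset.mem_coe, Finset.mem_erase] at ha hb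
          omega), Finset.card_erase_of_mem h0, hcard]
        omega
    · intro U hU
      rw [Finset.mem_powersetCard] at hU
      obtain ⟨hsub, hcard⟩ := hU
      simp only [Finset.mem_filter, Finset.mem_powersetCard]
      refine ⟨⟨?_, ?_⟩, Finset.mem_insert_self 0 _⟩
      · intro a ha
        simp only [Finset.mem_insert, Finset.mem_image] at ha
        rcases ha with rfl | ⟨b, hb, rfl⟩
        · exact Finset.mem_range.mpr (by omega)
        · have := Finset.mem_range.mp (hsub hb)
          exact Finset.mem_range.mpr (by omega)
      · rw [Finset.card_insert_of_notMem, Finset.card_image_of_injective _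
          (fun a b h => by omega), hcard]
        simp only [Finset.mem_image]
        rintro ⟨b, _, h⟩
        omega
    · intro T hT
      simp only [Finset.mem_filter] at hT
      ext a
      simp only [Finset.mem_insert, Finset.mem_image, Finset.mem_erase]
      constructor
      · rintro (rfl | ⟨b, ⟨c, ⟨hc0, hc⟩, rfl⟩, rfl⟩)
        · exact hT.2
        · have : c - 1 + 1 = c := by omega
          rwa [this]
      · intro ha
        by_cases ha0 : a = 0
        · exact Or.inl ha0
        · exact Or.inr ⟨a - 1, ⟨a, ⟨ha0, ha⟩, rfl⟩, by omega⟩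
    · intro U hU
      rw [Finset.mem_powersetCard] at hU
      ext a
      simp only [Finset.mem_image, Finset.mem_erase, Finset.mem_insert]
      constructor
      · rintro ⟨b, ⟨hb0, rfl | ⟨c, hc, rfl⟩⟩, rfl⟩
        · omega
        · simpa [Nat.add_sub_cancel] using hc
      · intro ha
        exact ⟨a + 1, ⟨by omega, Or.inr ⟨a, ha, rfl⟩⟩, by omega⟩
    · intro T hT
      simp only [Finset.mem_filter] at hT
      rw [Finset.prod_range_succ']
      have h0 : rterm η T 0 = ENNReal.ofReal (1 - η 0) := by
        simp [rterm, hT.2]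
      rw [h0, mul_comm]
      congr 1
      refine Finset.prod_congr rfl fun j _ => ?_
      simp only [rterm, shift]
      congr 1
      have : j + 1 ∈ T ↔ j ∈ (T.erase 0).image (· - 1) := by
        simp only [Finset.mem_image, Finset.mem_erase]
        constructor
        · intro h; exact ⟨j + 1, ⟨by omega, h⟩, by omega⟩
        · rintro ⟨b, ⟨hb0, hb⟩, rfl⟩
          have : b - 1 + 1 = b := by omega
          rwa [this]
      by_cases h : j + 1 ∈ T
      · rw [if_pos h, if_pos (this.mp h)]
      · rw [if_neg h, if_neg (fun hc => h (this.mpr hc))]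
  rw [hA, hB]
  ring

end ERWAux

namespace ERWAux

lemma G_succ_zero (η : ℕ → ℝ) (v : ℕ) :
    G η (v + 1) 0 = ENNReal.ofReal (η 0) * G (shift η) v 0 := by
  rw [G_v_zero, G_v_zero, Finset.prod_range_succ', mul_comm]
  rfl

lemma one_le_u {z u : ℝ≥0∞} (hz1 : 1 ≤ z) (hrel : 2 * u = 1 + z * u) (hune : u ≠ ∞) :
    1 ≤ u := by
  have h1 : 1 + u ≤ 1 + z * u := by
    gcongr
    exact le_mul_of_one_le_left zero_le hz1
  rw [← hrel, two_mul] at h1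
  rw [← ENNReal.add_le_add_iff_right hune]
  rwa [add_comm u u] at h1

lemma G_mgf (z u : ℝ≥0∞) (hz1 : 1 ≤ z) (hzu : 1 ≤ z * u) (hrel : 2 * u = 1 + z * u)
    (hune : u ≠ ∞) :
    ∀ (N v m : ℕ) (η : ℕ → ℝ), (∀ l, 0 ≤ η l ∧ η l ≤ 1) →
      (∀ l, m ≤ l → η l = 1 / 2) →
      ∑ w ∈ Finset.range N, z ^ w * G η v w ≤ z ^ m * u ^ (v + 1) := by
  have hu1 : 1 ≤ u := one_le_u hz1 hrel hune
  intro N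
  induction N with
  | zero => intro v m η hη hfair; simp
  | succ N ihN =>
    intro v
    induction v with
    | zero =>
      intro m η hη hfair
      set a := ENNReal.ofReal (η 0) with ha
      set b := ENNReal.ofReal (1 - η 0) with hb
      have hab : a + b = 1 := by
        rw [ha, hb, ← ENNReal.ofReal_add (hη 0).1 (by linarith [(hη 0).2])]
        simp
      have hexp : ∑ w ∈ Finset.range (N + 1), z ^ w * G η 0 w
          = b * z * (∑ i ∈ Finset.range N, z ^ i * G (shift η) 0 i) + a := by
        rw [Finset.sum_range_succ']
        congr 1
        · rw [Finset.mul_sum]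
          refine Finset.sum_congr rfl fun i _ => ?_
          rw [G_zero_succ, pow_succ]
          ring
        · rw [pow_zero, one_mul, G_v_zero]
          simp [ha]
      rw [hexp]
      have hη' : ∀ l, 0 ≤ shift η l ∧ shift η l ≤ 1 := fun l => hη (l + 1)
      cases m with
      | zero =>
        have hfair' : ∀ l, 0 ≤ l → shift η l = 1 / 2 := fun l _ => hfair (l + 1) (Nat.zero_le _)
        have hT : ∑ i ∈ Finset.range N, z ^ i * G (shift η) 0 i ≤ z ^ 0 * u ^ (0 + 1) :=
          ihN 0 0 (shift η) hη' hfair'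
        rw [pow_zero, one_mul, pow_one] at hT
        have hab2 : a = b := by
          rw [ha, hb, hfair 0 (Nat.le_refl 0)]
          norm_num
        calc b * z * (∑ i ∈ Finset.range N, z ^ i * G (shift η) 0 i) + a
            ≤ b * z * u + a := by gcongr
          _ = a * (1 + z * u) := by rw [hab2]; ring
          _ = a * (2 * u) := by rw [hrel]
          _ = (a + b) * u := by rw [hab2]; ring
          _ = z ^ 0 * u ^ (0 + 1) := by rw [hab]; simp
      | succ m' =>
        have hfair' : ∀ l, m' ≤ l → shift η l = 1 / 2 := fun l hl => hfair (l + 1) (by omega)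
        have hT : ∑ i ∈ Finset.range N, z ^ i * G (shift η) 0 i ≤ z ^ m' * u ^ (0 + 1) :=
          ihN 0 m' (shift η) hη' hfair'
        rw [pow_one] at hT
        have ha1 : a ≤ 1 := ENNReal.ofReal_le_one.mpr (hη 0).2
        have hone : (1 : ℝ≥0∞) ≤ z ^ (m' + 1) * u ^ (0 + 1) := by
          rw [pow_one]
          exact one_le_mul (one_le_pow_of_one_le' hz1 _) hu1
        calc b * z * (∑ i ∈ Finset.range N, z ^ i * G (shift η) 0 i) + a
            ≤ b * z * (z ^ m' * u) + a * (z ^ (m' + 1) * u ^ (0 + 1)) := by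
              gcongr
              exact le_mul_of_one_le_right zero_le hone
          _ = b * (z ^ (m' + 1) * u ^ (0 + 1)) + a * (z ^ (m' + 1) * u ^ (0 + 1)) := by
              rw [pow_one, pow_succ]; ring
          _ = (a + b) * (z ^ (m' + 1) * u ^ (0 + 1)) := by ring
          _ = z ^ (m' + 1) * u ^ (0 + 1) := by rw [hab, one_mul]
    | succ v ihv =>
      intro m η hη hfair
      set a := ENNReal.ofReal (η 0) with ha
      set b := ENNReal.ofReal (1 - η 0) with hb
      have hab : a + b = 1 := by
        rw [ha, hb, ← ENNReal.ofReal_add (hη 0).1 (by linarith [(hη 0).2])]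
        simp
      have hexp : ∑ w ∈ Finset.range (N + 1), z ^ w * G η (v + 1) w
          = a * (∑ w ∈ Finset.range (N + 1), z ^ w * G (shift η) v w)
            + b * z * (∑ i ∈ Finset.range N, z ^ i * G (shift η) (v + 1) i) := by
        rw [Finset.sum_range_succ', Finset.sum_range_succ']
        have h1 : ∀ i ∈ Finset.range N, z ^ (i + 1) * G η (v + 1) (i + 1)
            = a * (z ^ (i + 1) * G (shift η) v (i + 1))
              + b * z * (z ^ i * G (shift η) (v + 1) i) := by
          intro i _
          rw [G_succ_succ, pow_succ]
          ring
        rw [Finset.sum_congr rfl h1, Finset.sum_add_distrib, ← Finset.mul_sum, ← Finset.mul_sum]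
        rw [pow_zero, one_mul, one_mul, G_succ_zero]
        ring
      rw [hexp]
      have hη' : ∀ l, 0 ≤ shift η l ∧ shift η l ≤ 1 := fun l => hη (l + 1)
      cases m with
      | zero =>
        have hfair' : ∀ l, 0 ≤ l → shift η l = 1 / 2 := fun l _ => hfair (l + 1) (Nat.zero_le _)
        have hT1 : ∑ w ∈ Finset.range (N + 1), z ^ w * G (shift η) v w ≤ z ^ 0 * u ^ (v + 1) :=
          ihv 0 (shift η) hη' hfair'
        have hT2 : ∑ i ∈ Finset.range N, z ^ i * G (shift η) (v + 1) i
            ≤ z ^ 0 * u ^ (v + 2) := ihN (v + 1) 0 (shift η) hη' hfair'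
        rw [pow_zero, one_mul] at hT1 hT2
        have hab2 : a = b := by
          rw [ha, hb, hfair 0 (Nat.le_refl 0)]
          norm_num
        calc a * (∑ w ∈ Finset.range (N + 1), z ^ w * G (shift η) v w)
              + b * z * (∑ i ∈ Finset.range N, z ^ i * G (shift η) (v + 1) i)
            ≤ a * u ^ (v + 1) + b * z * u ^ (v + 2) := by gcongr
          _ = a * u ^ (v + 1) * (1 + z * u) := by rw [hab2, pow_succ]; ring
          _ = a * u ^ (v + 1) * (2 * u) := by rw [hrel]
          _ = (a + b) * u ^ (v + 2) := by rw [hab2, pow_succ]; ring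
          _ = z ^ 0 * u ^ (v + 1 + 1) := by rw [hab]; simp
      | succ m' =>
        have hfair' : ∀ l, m' ≤ l → shift η l = 1 / 2 := fun l hl => hfair (l + 1) (by omega)
        have hT1 : ∑ w ∈ Finset.range (N + 1), z ^ w * G (shift η) v w
            ≤ z ^ m' * u ^ (v + 1) := ihv m' (shift η) hη' hfair'
        have hT2 : ∑ i ∈ Finset.range N, z ^ i * G (shift η) (v + 1) i
            ≤ z ^ m' * u ^ (v + 2) := ihN (v + 1) m' (shift η) hη' hfair'
        calc a * (∑ w ∈ Finset.range (N + 1), z ^ w * G (shift η) v w)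
              + b * z * (∑ i ∈ Finset.range N, z ^ i * G (shift η) (v + 1) i)
            ≤ a * (z ^ m' * u ^ (v + 1)) + b * z * (z ^ m' * u ^ (v + 2)) := by gcongr
          _ ≤ a * (z ^ m' * u ^ (v + 1) * (z * u)) + b * z * (z ^ m' * u ^ (v + 2)) := by
              refine add_le_add ?_ le_rfl
              exact mul_le_mul_right (le_mul_of_one_le_right zero_le hzu) a
          _ = (a + b) * (z ^ (m' + 1) * u ^ (v + 1 + 1)) := by
              rw [pow_succ z m', pow_succ u (v + 1)]
              ring
          _ = z ^ (m' + 1) * u ^ (v + 1 + 1) := by rw [hab, one_mul]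
  
lemma G_mgf_tsum (z u : ℝ≥0∞) (hz1 : 1 ≤ z) (hzu : 1 ≤ z * u) (hrel : 2 * u = 1 + z * u)
    (hune : u ≠ ∞) (v m : ℕ) (η : ℕ → ℝ) (hη : ∀ l, 0 ≤ η l ∧ η l ≤ 1)
    (hfair : ∀ l, m ≤ l → η l = 1 / 2) :
    ∑' w : ℕ, z ^ w * G η v w ≤ z ^ m * u ^ (v + 1) := by
  refine Summable.tsum_le_of_sum_range_le ENNReal.summable fun N => ?_
  exact G_mgf z u hz1 hzu hrel hune N v m η hη hfair

end ERWAux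



namespace ERWAux
open MeasureTheory ProbabilityTheory

variable (S : ERWSetup)

lemma meas_cookie_coord (x : ℤ) (j : ℕ) : Measurable fun ω => S.cookie ω x j :=
  (measurable_pi_apply j).comp ((measurable_pi_apply x).comp S.meas_cookie)

lemma meas_B_coord (x : ℤ) (j : ℕ) : Measurable fun ω => S.B ω x j :=
  (measurable_pi_apply j).comp ((measurable_pi_apply x).comp S.meas_B)

/-- finite coin cylinder event -/
def cylE (s : Finset (ℤ × ℕ)) (bv : ℤ × ℕ → Bool) : Set S.Ω :=
  {ω | ∀ p ∈ s, S.B ω p.1 p.2 = bv p}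

lemma measurableSet_cylE (s : Finset (ℤ × ℕ)) (bv : ℤ × ℕ → Bool) :
    MeasurableSet (cylE S s bv) := by
  have h : cylE S s bv = ⋂ p ∈ s, {ω | S.B ω p.1 p.2 = bv p} := by
    ext ω; simp [cylE]
  rw [h]
  exact MeasurableSet.biInter s.countable_toSet fun p _ =>
    (meas_B_coord S p.1 p.2) (measurableSet_singleton (bv p))

lemma meas_term (s : Finset (ℤ × ℕ)) (bv : ℤ × ℕ → Bool) :
    Measurable fun ω => ∏ p ∈ s, (if bv p then S.cookie ω p.1 p.2
      else 1 - S.cookie ω p.1 p.2) := by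
  refine Finset.measurable_prod s fun p _ => ?_
  cases hb : bv p
  · simpa [hb] using ((meas_cookie_coord S p.1 p.2).const_sub (1:ℝ))
  · simpa [hb] using meas_cookie_coord S p.1 p.2

lemma factor_mem_Icc (b : Bool) (c : ℝ) (hc : c ∈ Set.Icc (0:ℝ) 1) :
    (if b = true then c else 1 - c) ∈ Set.Icc (0:ℝ) 1 := by
  obtain ⟨h0, h1⟩ := hc
  cases b
  · simp only [Bool.false_eq_true, if_false]
    constructor <;> linarith
  · simp only [if_true]
    constructor <;> linarith

lemma term_mem_Icc (s : Finset (ℤ × ℕ)) (bv : ℤ × ℕ → Bool) (ω : S.Ω) :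
    (∏ p ∈ s, (if bv p then S.cookie ω p.1 p.2 else 1 - S.cookie ω p.1 p.2)) ∈
      Set.Icc (0:ℝ) 1 := by
  constructor
  · exact Finset.prod_nonneg fun p _ =>
      (factor_mem_Icc (bv p) _ (S.cookie_mem ω p.1 p.2)).1
  · exact Finset.prod_le_one
      (fun p _ => (factor_mem_Icc (bv p) _ (S.cookie_mem ω p.1 p.2)).1)
      (fun p _ => (factor_mem_Icc (bv p) _ (S.cookie_mem ω p.1 p.2)).2)

/-- the probability of a coin cylinder equals the integral of the product of cookie terms. -/
lemma mu_cylE (s : Finset (ℤ × ℕ)) (bv : ℤ × ℕ → Bool) :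
    S.μ (cylE S s bv) = ∫⁻ ω, ∏ p ∈ s,
      ENNReal.ofReal (if bv p then S.cookie ω p.1 p.2 else 1 - S.cookie ω p.1 p.2) ∂S.μ := by
  haveI := S.isProb
  have hm : MeasurableSpace.comap S.cookie inferInstance ≤ S.mΩ := S.meas_cookie.comap_le
  set f : S.Ω → ℝ := fun ω => if ∀ p ∈ s, S.B ω p.1 p.2 = bv p then (1 : ℝ) else 0 with hf
  set g : S.Ω → ℝ := fun ω => ∏ p ∈ s, (if bv p then S.cookie ω p.1 p.2
      else 1 - S.cookie ω p.1 p.2) with hg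
  have hfind : f = (cylE S s bv).indicator (fun _ => (1:ℝ)) := by
    funext ω
    by_cases h : ω ∈ cylE S s bv
    · rw [Set.indicator_of_mem h, hf]; exact if_pos h
    · rw [Set.indicator_of_notMem h, hf]; exact if_neg h
  have hfi : Integrable f S.μ := by
    rw [hfind]
    exact (integrable_const (1:ℝ)).indicator (measurableSet_cylE S s bv)
  have h1 : ∫ ω, f ω ∂S.μ = (S.μ (cylE S s bv)).toReal := by
    rw [hfind, integral_indicator_const _ (measurableSet_cylE S s bv)]
    simp
    rfl
  have h2 : ∫ ω, f ω ∂S.μ = ∫ ω, g ω ∂S.μ := by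
    rw [← integral_condExp (μ := S.μ) (f := f) hm]
    exact integral_congr_ae (S.condB s bv)
  have hgi : Integrable g S.μ := by
    refine Integrable.mono' (integrable_const (1:ℝ)) ((meas_term S s bv).aestronglyMeasurable) ?_
    refine Filter.Eventually.of_forall fun ω => ?_
    have := term_mem_Icc S s bv ω
    rw [Real.norm_eq_abs, abs_of_nonneg this.1]
    exact this.2
  have hg0 : 0 ≤ᵐ[S.μ] g := Filter.Eventually.of_forall fun ω => (term_mem_Icc S s bv ω).1
  have h3 : S.μ (cylE S s bv) = ENNReal.ofReal (∫ ω, g ω ∂S.μ) := by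
    rw [← h2, h1, ENNReal.ofReal_toReal (measure_ne_top _ _)]
  rw [h3, MeasureTheory.ofReal_integral_eq_lintegral_ofReal hgi hg0]
  refine lintegral_congr fun ω => ?_
  rw [hg]
  refine (ENNReal.ofReal_prod_of_nonneg fun p _ => ?_)
  exact (factor_mem_Icc (bv p) _ (S.cookie_mem ω p.1 p.2)).1

end ERWAux

namespace ERWAux
open MeasureTheory ProbabilityTheory

variable (S : ERWSetup)

lemma ofReal_half : ENNReal.ofReal (1/2 : ℝ) = 2⁻¹ := by
  rw [show (1/2 : ℝ) = (2:ℝ)⁻¹ by norm_num, ENNReal.ofReal_inv_of_pos (by norm_num)]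
  norm_num

/-- a.s. every row contains infinitely many `true` coins. -/
lemma null_row (x : ℤ) : S.μ {ω | ∃ L, ∀ j, L ≤ j → S.B ω x j = false} = 0 := by
  haveI := S.isProb
  have key : ∀ L : ℕ, S.μ {ω | ∀ j, L ≤ j → S.B ω x j = false} = 0 := by
    intro L
    set A := {ω | ∀ j, L ≤ j → S.B ω x j = false} with hA
    have hb : ∀ T : ℕ, S.μ A ≤ 2⁻¹ ^ T := by
      intro T
      set c := max L S.M with hc
      set s : Finset (ℤ × ℕ) := (Finset.range T).image (fun t => (x, c + t)) with hs
      have hsub : A ⊆ cylE S s (fun _ => false) := by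
        intro ω hω p hp
        simp only [hs, Finset.mem_image, Finset.mem_range] at hp
        obtain ⟨t, _, rfl⟩ := hp
        exact hω (c + t) (by omega)
      refine le_trans (measure_mono hsub) ?_
      rw [mu_cylE]
      have hbound : ∀ᵐ ω ∂S.μ, (∏ p ∈ s, ENNReal.ofReal
          (if (fun _ => false) p = true then S.cookie ω p.1 p.2
            else 1 - S.cookie ω p.1 p.2)) ≤ 2⁻¹ ^ T := by
        filter_upwards [S.A1] with ω hω
        have heq : ∀ p ∈ s, ENNReal.ofReal (if (fun _ : ℤ × ℕ => false) p = true
            then S.cookie ω p.1 p.2 else 1 - S.cookie ω p.1 p.2) = 2⁻¹ := by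
          intro p hp
          simp only [hs, Finset.mem_image, Finset.mem_range] at hp
          obtain ⟨t, _, rfl⟩ := hp
          have : S.cookie ω x (c + t) = 1/2 := hω x (c + t) (by omega)
          simp only [Bool.false_eq_true, if_false, this]
          rw [show (1 : ℝ) - 1/2 = 1/2 by norm_num]
          exact ofReal_half
        rw [Finset.prod_congr rfl heq, Finset.prod_const]
        have hcard : s.card = T := by
          rw [hs, Finset.card_image_of_injective _ (fun a b h => by
            simpa using h), Finset.card_range]
        rw [hcard]
      calc ∫⁻ ω, (∏ p ∈ s, ENNReal.ofReal
            (if (fun _ => false) p = true then S.cookie ω p.1 p.2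
              else 1 - S.cookie ω p.1 p.2)) ∂S.μ
          ≤ ∫⁻ _, 2⁻¹ ^ T ∂S.μ := lintegral_mono_ae hbound
        _ = 2⁻¹ ^ T := by rw [lintegral_const, measure_univ, mul_one]
    by_contra hne
    have hpos : 0 < S.μ A := pos_iff_ne_zero.mpr hne
    have htend : Tendsto (fun T : ℕ => (2⁻¹ : ℝ≥0∞) ^ T) atTop (nhds 0) :=
      ENNReal.tendsto_pow_atTop_nhds_zero_of_lt_one (by norm_num)
    obtain ⟨T, hT⟩ := (htend.eventually (gt_mem_nhds hpos)).exists
    exact absurd (hb T) (not_le.mpr hT)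
  have hcover : {ω | ∃ L, ∀ j, L ≤ j → S.B ω x j = false}
      = ⋃ L : ℕ, {ω | ∀ j, L ≤ j → S.B ω x j = false} := by
    ext ω; simp
  rw [hcover]
  refine le_antisymm (le_trans (measure_iUnion_le _) ?_) zero_le
  simp [key]

end ERWAux

namespace ERWAux
open MeasureTheory ProbabilityTheory

variable (S : ERWSetup)

lemma card_filter_false (c : ℕ → Bool) (n : ℕ) :
    ((Finset.range n).filter fun j => c j = false).card = n - countTrue c n := by
  have h := Finset.card_filter_add_card_filter_not (s := Finset.range n)
      (p := fun j => c j = true)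
  have h2 : (Finset.range n).filter (fun j => ¬ c j = true)
      = (Finset.range n).filter (fun j => c j = false) := by
    refine Finset.filter_congr fun j _ => ?_
    cases c j <;> simp
  rw [h2] at h
  have h3 : countTrue c n ≤ n := countTrue_le c n
  simp only [countTrue] at h3 ⊢
  rw [Finset.card_range] at h
  omega

/-- the event that row `x` makes the transition `v → w` with the canonical coin-prefix
pattern (exactly `v+1` trues among the first `v+w+1` coins, the last being true). -/
def StepSet (x : ℤ) (v w : ℕ) : Set S.Ω :=
  {ω | countTrue (S.B ω x) (v + w + 1) = v + 1 ∧ S.B ω x (v + w) = true}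

/-- trajectory event -/
def TrajSet {i : ℕ} (u : Fin (i + 1) → ℕ) : Set S.Ω :=
  ⋂ l : Fin i, StepSet S ((l : ℕ) : ℤ) (u l.castSucc) (u l.succ)

lemma mu_traj {i : ℕ} (u : Fin (i + 1) → ℕ) :
    S.μ (TrajSet S u) ≤ ∫⁻ ω, ∏ l : Fin i,
      G (fun j => S.cookie ω ((l : ℕ) : ℤ) j) (u l.castSucc) (u l.succ) ∂S.μ := by
  classical
  set v : Fin i → ℕ := fun l => u l.castSucc with hv
  set w : Fin i → ℕ := fun l => u l.succ with hw
  set PT := (Finset.univ : Finset (Fin i)).pi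
      (fun l => (Finset.range (v l + w l)).powersetCard (w l)) with hPT
  set sBig := Finset.univ.biUnion
      (fun l : Fin i => (Finset.range (v l + w l + 1)).image (fun j => (((l:ℕ):ℤ), j))) with hsBig
  set Tmap : (∀ a ∈ (Finset.univ : Finset (Fin i)), Finset ℕ) → ℤ → Finset ℕ :=
    fun Tv z => if h : z.toNat < i ∧ 0 ≤ z then Tv ⟨z.toNat, h.1⟩ (Finset.mem_univ _) else ∅
    with hTmap
  set bvT : (∀ a ∈ (Finset.univ : Finset (Fin i)), Finset ℕ) → ℤ × ℕ → Bool :=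
    fun Tv p => decide (p.2 ∉ Tmap Tv p.1) with hbvT
  have hTmapl : ∀ Tv (l : Fin i), Tmap Tv ((l:ℕ):ℤ) = Tv l (Finset.mem_univ l) := by
    intro Tv l
    have h1 : ((l:ℕ):ℤ).toNat = (l:ℕ) := Int.toNat_natCast _
    have hc : (((l:ℕ):ℤ)).toNat < i ∧ (0:ℤ) ≤ ((l:ℕ):ℤ) :=
      ⟨by rw [h1]; exact l.isLt, Int.natCast_nonneg _⟩
    have he : (⟨((l:ℕ):ℤ).toNat, hc.1⟩ : Fin i) = l := Fin.ext (by simp [h1])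
    simp only [hTmap]
    rw [dif_pos hc]
    exact congrArg (fun (x : Fin i) => Tv x (Finset.mem_univ x)) he
  -- Step 1 : cover
  have hcover : TrajSet S u ⊆ ⋃ Tv ∈ PT, cylE S sBig (bvT Tv) := by
    intro ω hω
    have hstep : ∀ l : Fin i, countTrue (S.B ω ((l:ℕ):ℤ)) (v l + w l + 1) = v l + 1 ∧
        S.B ω ((l:ℕ):ℤ) (v l + w l) = true := by
      intro l
      have := Set.mem_iInter.mp hω l
      exact this
    set Tv : ∀ a ∈ (Finset.univ : Finset (Fin i)), Finset ℕ :=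
      fun l _ => (Finset.range (v l + w l)).filter (fun j => S.B ω ((l:ℕ):ℤ) j = false) with hTv
    have hmemPT : Tv ∈ PT := by
      rw [hPT, Finset.mem_pi]
      intro l _
      rw [Finset.mem_powersetCard]
      constructor
      · exact Finset.filter_subset _ _
      · rw [hTv]
        have hcT : countTrue (S.B ω ((l:ℕ):ℤ)) (v l + w l) = v l := by
          have h1 := countTrue_succ (S.B ω ((l:ℕ):ℤ)) (v l + w l)
          rw [(hstep l).1, if_pos (hstep l).2] at h1
          omega
        rw [card_filter_false, hcT]
        omega
    refine Set.mem_iUnion₂.mpr ⟨Tv, hmemPT, ?_⟩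
    intro p hp
    rw [hsBig, Finset.mem_biUnion] at hp
    obtain ⟨l, _, hp2⟩ := hp
    rw [Finset.mem_image] at hp2
    obtain ⟨j, hj, rfl⟩ := hp2
    rw [Finset.mem_range] at hj
    rw [hbvT]
    simp only [hTmapl]
    rw [hTv]
    by_cases hmem : j ∈ (Finset.range (v l + w l)).filter (fun j => S.B ω ((l:ℕ):ℤ) j = false)
    · have := (Finset.mem_filter.mp hmem).2
      simp [hmem, this]
    · have hBj : S.B ω ((l:ℕ):ℤ) j = true := by
        by_cases hjr : j < v l + w l
        · rcases Bool.eq_false_or_eq_true (S.B ω ((l:ℕ):ℤ) j) with hb | hb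
          · exact hb
          · exact absurd (Finset.mem_filter.mpr ⟨Finset.mem_range.mpr hjr, hb⟩) hmem
        · have : j = v l + w l := by omega
          rw [this]
          exact (hstep l).2
      simp [hmem, hBj]
  -- Step 2+3 : measure bound via cylinders
  have h2 : S.μ (TrajSet S u) ≤ ∑ Tv ∈ PT, S.μ (cylE S sBig (bvT Tv)) :=
    le_trans (measure_mono hcover) (measure_biUnion_finset_le PT _)
  -- Step 4 : each cylinder probability
  have h3 : ∀ Tv ∈ PT, S.μ (cylE S sBig (bvT Tv)) = ∫⁻ ω, ∏ l : Fin i,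
      (∏ j ∈ Finset.range (v l + w l + 1),
        rterm (fun j' => S.cookie ω ((l:ℕ):ℤ) j') (Tv l (Finset.mem_univ l)) j) ∂S.μ := by
    intro Tv _
    rw [mu_cylE]
    refine lintegral_congr fun ω => ?_
    rw [hsBig, Finset.prod_biUnion]
    · refine Finset.prod_congr rfl fun l _ => ?_
      rw [Finset.prod_image (by intro a _ b _ h; simpa using h)]
      refine Finset.prod_congr rfl fun j _ => ?_
      rw [hbvT]
      simp only [hTmapl]
      rw [rterm]
      by_cases hmem : j ∈ Tv l (Finset.mem_univ l)
      · simp [hmem]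
      · simp [hmem]
    · intro a _ b _ hab
      simp only [Function.onFun]
      refine Finset.disjoint_left.mpr ?_
      intro p hpa hpb
      rw [Finset.mem_image] at hpa hpb
      obtain ⟨ja, _, rfl⟩ := hpa
      obtain ⟨jb, _, hpb2⟩ := hpb
      apply hab
      have : ((b:ℕ):ℤ) = ((a:ℕ):ℤ) := congrArg Prod.fst hpb2
      exact (Fin.ext (by exact_mod_cast this.symm)).symm ▸ rfl
  -- Step 5+6 : sum the integrals and interchange
  calc S.μ (TrajSet S u) ≤ ∑ Tv ∈ PT, S.μ (cylE S sBig (bvT Tv)) := h2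
    _ = ∑ Tv ∈ PT, ∫⁻ ω, ∏ l : Fin i,
        (∏ j ∈ Finset.range (v l + w l + 1),
          rterm (fun j' => S.cookie ω ((l:ℕ):ℤ) j') (Tv l (Finset.mem_univ l)) j) ∂S.μ :=
        Finset.sum_congr rfl h3
    _ = ∫⁻ ω, ∑ Tv ∈ PT, ∏ l : Fin i,
        (∏ j ∈ Finset.range (v l + w l + 1),
          rterm (fun j' => S.cookie ω ((l:ℕ):ℤ) j') (Tv l (Finset.mem_univ l)) j) ∂S.μ := by
        rw [← lintegral_finset_sum]
        intro Tv _
        refine Finset.measurable_prod _ fun l _ => ?_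
        refine Finset.measurable_prod _ fun j _ => ?_
        unfold rterm
        by_cases hmem : j ∈ Tv l (Finset.mem_univ l)
        · simp only [hmem, if_true]
          exact (measurable_const.sub (meas_cookie_coord S _ j)).ennreal_ofReal
        · simp only [hmem, if_false]
          exact (meas_cookie_coord S _ j).ennreal_ofReal
    _ = ∫⁻ ω, ∏ l : Fin i,
        G (fun j => S.cookie ω ((l : ℕ) : ℤ) j) (u l.castSucc) (u l.succ) ∂S.μ := by
        refine lintegral_congr fun ω => ?_
        have hps := Finset.prod_sum (s := (Finset.univ : Finset (Fin i)))
          (t := fun l => (Finset.range (v l + w l)).powersetCard (w l))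
          (f := fun l T => ∏ j ∈ Finset.range (v l + w l + 1),
             rterm (fun j' => S.cookie ω ((l:ℕ):ℤ) j') T j)
        have hG : (∏ l : Fin i, G (fun j => S.cookie ω ((l:ℕ):ℤ) j) (u l.castSucc) (u l.succ))
            = ∏ l ∈ Finset.univ, ∑ T ∈ (Finset.range (v l + w l)).powersetCard (w l),
              ∏ j ∈ Finset.range (v l + w l + 1),
                rterm (fun j' => S.cookie ω ((l:ℕ):ℤ) j') T j :=
          Finset.prod_congr rfl fun l _ => rfl
        rw [hG, hps]
        refine Finset.sum_congr rfl fun Tv _ => ?_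
        exact (Finset.prod_attach Finset.univ
          (fun l => ∏ j ∈ Finset.range (v l + w l + 1),
            rterm (fun j' => S.cookie ω ((l:ℕ):ℤ) j') (Tv l (Finset.mem_univ l)) j)).symm
end ERWAux

namespace ERWAux
open MeasureTheory ProbabilityTheory

/-- the chain of exponential-moment parameters -/
def qgen (m : ℕ) : ℝ≥0 := ((m + 1 : ℕ) : ℝ≥0) / ((m : ℕ) : ℝ≥0)

lemma qgen_coe (m : ℕ) : ((qgen m : ℝ≥0) : ℝ) = ((m:ℝ) + 1) / (m:ℝ) := by
  rw [qgen, NNReal.coe_div]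
  push_cast
  ring_nf

lemma one_le_qgen {m : ℕ} (hm : 1 ≤ m) : 1 ≤ qgen m := by
  rw [← NNReal.coe_le_coe, qgen_coe, NNReal.coe_one]
  have h1 : (1:ℝ) ≤ (m:ℝ) := by exact_mod_cast hm
  rw [le_div_iff₀ (by linarith)]
  linarith

lemma qgen_le_two {m : ℕ} (hm : 1 ≤ m) : qgen m ≤ 2 := by
  rw [← NNReal.coe_le_coe, qgen_coe]
  have h1 : (1:ℝ) ≤ (m:ℝ) := by exact_mod_cast hm
  rw [div_le_iff₀ (by linarith)]
  push_cast
  linarith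

lemma qgen_rel {m : ℕ} (hm : 1 ≤ m) :
    2 * qgen m = 1 + qgen (m + 1) * qgen m := by
  rw [← NNReal.coe_inj]
  have h1 : (1:ℝ) ≤ (m:ℝ) := by exact_mod_cast hm
  push_cast [qgen_coe]
  field_simp
  ring

def pseq (k j : ℕ) : ℝ≥0∞ := ((qgen (2 * k - j) : ℝ≥0) : ℝ≥0∞)

lemma one_le_pseq (k j : ℕ) (h : j ≤ k) (hk : 1 ≤ k) : 1 ≤ pseq k j := by
  rw [pseq, ← ENNReal.coe_one, ENNReal.coe_le_coe]
  exact one_le_qgen (by omega)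

lemma pseq_ne_top (k j : ℕ) : pseq k j ≠ ∞ := ENNReal.coe_ne_top

lemma pseq_le_two (k j : ℕ) (h : j ≤ k) (hk : 1 ≤ k) : pseq k j ≤ 2 := by
  rw [pseq, ← ENNReal.coe_ofNat, ENNReal.coe_le_coe]
  exact qgen_le_two (by omega)

lemma pseq_rel (k j : ℕ) (h : j + 1 ≤ k) (hk : 1 ≤ k) :
    2 * pseq k (j + 1) = 1 + pseq k j * pseq k (j + 1) := by
  have e1 : 2 * k - j = (2 * k - (j + 1)) + 1 := by omega
  have h1 : 1 ≤ 2 * k - (j + 1) := by omega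
  rw [pseq, pseq, e1, ← ENNReal.coe_ofNat, ← ENNReal.coe_mul, ← ENNReal.coe_mul,
    ← ENNReal.coe_one, ← ENNReal.coe_add, ENNReal.coe_inj]
  exact qgen_rel h1

end ERWAux

namespace ERWAux
open MeasureTheory ProbabilityTheory

variable (S : ERWSetup)

def Kfun (ω : S.Ω) (x : ℤ) (v w : ℕ) : ℝ≥0∞ := G (fun j => S.cookie ω x j) v w

def WtP (ω : S.Ω) (i : ℕ) (x : ℤ) (u : Fin (i + 1) → ℕ) : ℝ≥0∞ :=
  ∏ l : Fin i, Kfun S ω (x + (l : ℕ)) (u l.castSucc) (u l.succ)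

lemma WtP_cons (ω : S.Ω) (i : ℕ) (x : ℤ) (a : ℕ) (u' : Fin (i + 1) → ℕ) :
    WtP S ω (i + 1) x (Fin.cons a u') = Kfun S ω x a (u' 0) * WtP S ω i (x + 1) u' := by
  rw [WtP, Fin.prod_univ_succ]
  congr 1
  · have h1 : (Fin.cons a u' : Fin (i + 2) → ℕ) (0 : Fin (i + 1)).castSucc = a := by
      rw [Fin.castSucc_zero]
      exact Fin.cons_zero (α := fun _ : Fin (i + 2) => ℕ) a u'
    have h2 : (Fin.cons a u' : Fin (i + 2) → ℕ) (0 : Fin (i + 1)).succ = u' 0 :=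
      Fin.cons_succ (α := fun _ : Fin (i + 2) => ℕ) a u' 0
    rw [h1, h2]
    norm_num
  · rw [WtP]
    refine Finset.prod_congr rfl fun l _ => ?_
    have h3 : (Fin.cons a u' : Fin (i + 2) → ℕ) l.succ.castSucc = u' l.castSucc := by
      rw [← Fin.succ_castSucc]
      exact Fin.cons_succ (α := fun _ : Fin (i + 2) => ℕ) a u' l.castSucc
    have h4 : (Fin.cons a u' : Fin (i + 2) → ℕ) l.succ.succ = u' l.succ :=
      Fin.cons_succ (α := fun _ : Fin (i + 2) => ℕ) a u' l.succ
    rw [h3, h4]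
    congr 1
    rw [Fin.val_succ]
    push_cast
    ring

lemma cons_last (i : ℕ) (a : ℕ) (u' : Fin (i + 1) → ℕ) :
    (Fin.cons a u' : Fin (i + 2) → ℕ) (Fin.last (i + 1)) = u' (Fin.last i) := by
  rw [← Fin.succ_last]
  exact Fin.cons_succ (α := fun _ : Fin (i + 2) => ℕ) a u' (Fin.last i)

/-- pointwise exponential-moment bound along trajectories -/
lemma PW (ω : S.Ω) (hfair : ∀ (x : ℤ) (j : ℕ), S.M ≤ j → S.cookie ω x j = 1 / 2)
    (k : ℕ) (hk : 1 ≤ k) :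
    ∀ i, i ≤ k → ∀ (x : ℤ) (v : ℕ),
      (∑' u : Fin (i + 1) → ℕ, if u 0 = v
        then (pseq k 0) ^ (u (Fin.last i)) * WtP S ω i x u else 0)
      ≤ (∏ j ∈ Finset.range i, (pseq k j) ^ (S.M + 1)) * (pseq k i) ^ (v + 1) := by
  intro i
  induction i with
  | zero =>
    intro _ x v
    rw [← ((Equiv.funUnique (Fin 1) ℕ).symm).tsum_eq]
    have hval : ∀ a : ℕ, (if ((Equiv.funUnique (Fin 1) ℕ).symm a) 0 = v
        then (pseq k 0) ^ (((Equiv.funUnique (Fin 1) ℕ).symm a) (Fin.last 0)) *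
          WtP S ω 0 x ((Equiv.funUnique (Fin 1) ℕ).symm a) else 0)
        = if a = v then (pseq k 0) ^ a else 0 := by
      intro a
      have hW : WtP S ω 0 x ((Equiv.funUnique (Fin 1) ℕ).symm a) = 1 := by
        rw [WtP, Finset.univ_eq_empty, Finset.prod_empty]
      rw [hW, mul_one]
      rfl
    rw [tsum_congr hval, tsum_eq_single v (fun b hb => if_neg hb), if_pos rfl]
    rw [Finset.range_zero, Finset.prod_empty, one_mul, pow_succ]
    exact le_mul_of_one_le_right zero_le (one_le_pseq k 0 (by omega) hk)
  | succ i ih =>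
    intro hik x v
    have hik' : i ≤ k := by omega
    set q := pseq k 0 with hq
    set BD := ∏ j ∈ Finset.range i, (pseq k j) ^ (S.M + 1) with hBD
    rw [← (Fin.consEquiv (fun _ : Fin (i + 2) => ℕ)).tsum_eq]
    have hval : ∀ p : ℕ × (Fin (i + 1) → ℕ),
        (if ((Fin.consEquiv (fun _ : Fin (i + 2) => ℕ)) p) 0 = v
          then q ^ (((Fin.consEquiv (fun _ : Fin (i + 2) => ℕ)) p) (Fin.last (i + 1))) *
            WtP S ω (i + 1) x ((Fin.consEquiv (fun _ : Fin (i + 2) => ℕ)) p) else 0)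
        = if p.1 = v then q ^ (p.2 (Fin.last i)) *
            (Kfun S ω x p.1 (p.2 0) * WtP S ω i (x + 1) p.2) else 0 := by
      intro p
      have he : ((Fin.consEquiv (fun _ : Fin (i + 2) => ℕ)) p : Fin (i + 2) → ℕ)
          = Fin.cons p.1 p.2 := rfl
      rw [he, cons_last, WtP_cons]
      have h0 : (Fin.cons p.1 p.2 : Fin (i + 2) → ℕ) 0 = p.1 :=
        Fin.cons_zero (α := fun _ : Fin (i + 2) => ℕ) p.1 p.2
      rw [h0]
    rw [tsum_congr hval, ENNReal.tsum_prod']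
    have hcol : ∀ a : ℕ, (∑' u' : Fin (i + 1) → ℕ, if a = v
        then q ^ (u' (Fin.last i)) * (Kfun S ω x a (u' 0) * WtP S ω i (x + 1) u') else 0)
        = if a = v then (∑' u' : Fin (i + 1) → ℕ,
            q ^ (u' (Fin.last i)) * (Kfun S ω x v (u' 0) * WtP S ω i (x + 1) u')) else 0 := by
      intro a
      by_cases ha : a = v
      · subst ha; simp
      · simp only [if_neg ha, tsum_zero]
    rw [tsum_congr hcol, tsum_eq_single v (fun b hb => if_neg hb), if_pos rfl]
    have hdec : (∑' u' : Fin (i + 1) → ℕ,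
        q ^ (u' (Fin.last i)) * (Kfun S ω x v (u' 0) * WtP S ω i (x + 1) u'))
        = ∑' b : ℕ, Kfun S ω x v b * (∑' u' : Fin (i + 1) → ℕ,
            if u' 0 = b then q ^ (u' (Fin.last i)) * WtP S ω i (x + 1) u' else 0) := by
      have h1 : ∀ b : ℕ, Kfun S ω x v b * (∑' u' : Fin (i + 1) → ℕ,
            if u' 0 = b then q ^ (u' (Fin.last i)) * WtP S ω i (x + 1) u' else 0)
          = ∑' u' : Fin (i + 1) → ℕ, (if u' 0 = b then
              q ^ (u' (Fin.last i)) * (Kfun S ω x v b * WtP S ω i (x + 1) u') else 0) := by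
        intro b
        rw [← ENNReal.tsum_mul_left]
        refine tsum_congr fun u' => ?_
        by_cases hb : u' 0 = b
        · rw [if_pos hb, if_pos hb]; ring
        · rw [if_neg hb, if_neg hb, mul_zero]
      rw [tsum_congr h1, ENNReal.tsum_comm]
      refine tsum_congr fun u' => ?_
      rw [tsum_eq_single (u' 0) (fun b hb => if_neg (fun h => hb h.symm)), if_pos rfl]
    rw [hdec]
    have hIH : ∀ b : ℕ, Kfun S ω x v b * (∑' u' : Fin (i + 1) → ℕ,
          if u' 0 = b then q ^ (u' (Fin.last i)) * WtP S ω i (x + 1) u' else 0)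
        ≤ (BD * pseq k i) * ((pseq k i) ^ b * Kfun S ω x v b) := by
      intro b
      calc Kfun S ω x v b * (∑' u' : Fin (i + 1) → ℕ,
            if u' 0 = b then q ^ (u' (Fin.last i)) * WtP S ω i (x + 1) u' else 0)
          ≤ Kfun S ω x v b * (BD * (pseq k i) ^ (b + 1)) :=
            mul_le_mul_right (ih hik' (x + 1) b) _
        _ = (BD * pseq k i) * ((pseq k i) ^ b * Kfun S ω x v b) := by
            rw [pow_succ]; ring
    calc (∑' b : ℕ, Kfun S ω x v b * (∑' u' : Fin (i + 1) → ℕ,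
          if u' 0 = b then q ^ (u' (Fin.last i)) * WtP S ω i (x + 1) u' else 0))
        ≤ ∑' b : ℕ, (BD * pseq k i) * ((pseq k i) ^ b * Kfun S ω x v b) :=
          ENNReal.tsum_le_tsum hIH
      _ = (BD * pseq k i) * ∑' b : ℕ, (pseq k i) ^ b * Kfun S ω x v b :=
          ENNReal.tsum_mul_left
      _ ≤ (BD * pseq k i) * ((pseq k i) ^ S.M * (pseq k (i + 1)) ^ (v + 1)) := by
          refine mul_le_mul_right ?_ _
          refine G_mgf_tsum (pseq k i) (pseq k (i + 1)) (one_le_pseq k i hik' hk)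
            (one_le_mul (one_le_pseq k i hik' hk) (one_le_pseq k (i + 1) hik hk))
            (pseq_rel k i hik hk) (pseq_ne_top k (i + 1)) v S.M
            (fun j => S.cookie ω x j)
            (fun l => ⟨(S.cookie_mem ω x l).1, (S.cookie_mem ω x l).2⟩)
            (hfair x)
      _ = ((∏ j ∈ Finset.range (i + 1), (pseq k j) ^ (S.M + 1))) * (pseq k (i + 1)) ^ (v + 1)
          := by
          rw [Finset.prod_range_succ, ← hBD, pow_succ]
          ring

end ERWAux

namespace ERWAux
open MeasureTheory ProbabilityTheory

variable (S : ERWSetup)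

lemma meas_G (x : ℤ) (v w : ℕ) :
    Measurable (fun ω => G (fun j => S.cookie ω x j) v w) := by
  unfold G
  refine Finset.measurable_sum _ fun T _ => ?_
  refine Finset.measurable_prod _ fun j _ => ?_
  unfold rterm
  by_cases hmem : j ∈ T
  · simp only [hmem, if_true]
    exact (measurable_const.sub (meas_cookie_coord S x j)).ennreal_ofReal
  · simp only [hmem, if_false]
    exact (meas_cookie_coord S x j).ennreal_ofReal

lemma prod_qgen (k : ℕ) (hk : 1 ≤ k) :
    ∀ i, i ≤ k → ((2 * k - i + 1 : ℕ) : ℝ≥0) * ∏ j ∈ Finset.range i, qgen (2 * k - j)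
      = ((2 * k + 1 : ℕ) : ℝ≥0) := by
  intro i
  induction i with
  | zero => simp
  | succ i ih =>
    intro hik
    have hik' : i ≤ k := by omega
    rw [Finset.prod_range_succ]
    have hm : (1:ℕ) ≤ 2 * k - i := by omega
    have hstep : ((2 * k - (i+1) + 1 : ℕ) : ℝ≥0) * qgen (2 * k - i)
        = ((2 * k - i + 1 : ℕ) : ℝ≥0) / ((2 * k - i : ℕ) : ℝ≥0)
          * ((2 * k - i : ℕ) : ℝ≥0) := by
      have e1 : 2 * k - (i + 1) + 1 = 2 * k - i := by omega
      rw [e1, qgen]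
      ring
    calc ((2 * k - (i+1) + 1 : ℕ) : ℝ≥0) *
          ((∏ j ∈ Finset.range i, qgen (2 * k - j)) * qgen (2 * k - i))
        = (((2 * k - (i+1) + 1 : ℕ) : ℝ≥0) * qgen (2 * k - i)) *
            ∏ j ∈ Finset.range i, qgen (2 * k - j) := by ring
      _ = (((2 * k - i + 1 : ℕ) : ℝ≥0) / ((2 * k - i : ℕ) : ℝ≥0)
            * ((2 * k - i : ℕ) : ℝ≥0)) * ∏ j ∈ Finset.range i, qgen (2 * k - j) := by
          rw [hstep]
      _ = ((2 * k - i + 1 : ℕ) : ℝ≥0) * ∏ j ∈ Finset.range i, qgen (2 * k - j) := by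
          rw [div_mul_cancel₀]
          have : (0:ℝ≥0) < ((2 * k - i : ℕ) : ℝ≥0) := by
            exact_mod_cast Nat.pos_of_ne_zero (by omega)
          exact this.ne'
      _ = ((2 * k + 1 : ℕ) : ℝ≥0) := ih hik'

lemma prod_pseq_le (k : ℕ) (hk : 1 ≤ k) (i : ℕ) (hik : i ≤ k) :
    ∏ j ∈ Finset.range i, pseq k j ≤ 2 := by
  have h1 : ∏ j ∈ Finset.range i, pseq k j
      = ((∏ j ∈ Finset.range i, qgen (2 * k - j) : ℝ≥0) : ℝ≥0∞) := by
    rw [ENNReal.coe_finset_prod]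
    exact Finset.prod_congr rfl fun j _ => rfl
  rw [h1, ← ENNReal.coe_ofNat, ENNReal.coe_le_coe]
  have key := prod_qgen k hk i hik
  have hpos : (0:ℝ≥0) < ((2 * k - i + 1 : ℕ) : ℝ≥0) := by
    exact_mod_cast Nat.pos_of_ne_zero (by omega)
  rw [← mul_le_mul_iff_right₀ hpos]
  rw [key]
  have h2 : (2 * k + 1 : ℕ) ≤ (2 * k - i + 1) * 2 := by omega
  calc ((2 * k + 1 : ℕ) : ℝ≥0) ≤ (((2 * k - i + 1) * 2 : ℕ) : ℝ≥0) := by exact_mod_cast h2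
    _ = ((2 * k - i + 1 : ℕ) : ℝ≥0) * 2 := by push_cast; ring

lemma prod_pseq_pow_le (k : ℕ) (hk : 1 ≤ k) (i : ℕ) (hik : i ≤ k) (M : ℕ) :
    ∏ j ∈ Finset.range i, (pseq k j) ^ (M + 1) ≤ 2 ^ (M + 1) := by
  rw [Finset.prod_pow]
  exact pow_le_pow_left' (prod_pseq_le k hk i hik) (M + 1)

end ERWAux

namespace ERWAux
open MeasureTheory ProbabilityTheory

variable (S : ERWSetup)

lemma WtP_zero (ω : S.Ω) (i : ℕ) (u : Fin (i + 1) → ℕ) :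
    WtP S ω i 0 u = ∏ l : Fin i,
      G (fun j => S.cookie ω ((l : ℕ) : ℤ) j) (u l.castSucc) (u l.succ) := by
  rw [WtP]
  refine Finset.prod_congr rfl fun l _ => ?_
  rw [Kfun, zero_add]

lemma level_bound (k : ℕ) (hk : 1 ≤ k) (i : ℕ) (hik : i ≤ k) (h₀ : ℕ) :
    S.μ {ω | h₀ ≤ backBP (S.B ω) 0 i} ≤ 2 ^ (S.M + 2) * ((pseq k 0)⁻¹) ^ h₀ := by
  haveI := S.isProb
  classical
  set q := pseq k 0 with hqdef
  have hq1 : 1 ≤ q := one_le_pseq k 0 (by omega) hk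
  have hq0 : q ≠ 0 := by
    intro h; rw [h] at hq1; exact absurd hq1 (by norm_num)
  have hqt : q ≠ ∞ := pseq_ne_top k 0
  set Junk : Set S.Ω := ⋃ x : ℤ, {ω | ∃ L, ∀ j, L ≤ j → S.B ω x j = false} with hJunk
  have hJunk0 : S.μ Junk = 0 := by
    refine le_antisymm (le_trans (measure_iUnion_le _) ?_) zero_le
    simp [null_row]
  set cond : (Fin (i + 1) → ℕ) → Prop :=
    fun u => u 0 = 0 ∧ h₀ ≤ u (Fin.last i) with hcond
  have hcover : {ω | h₀ ≤ backBP (S.B ω) 0 i}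
      ⊆ Junk ∪ ⋃ u : Fin (i + 1) → ℕ, ⋃ (_ : cond u), TrajSet S u := by
    intro ω hω
    by_cases hj : ω ∈ Junk
    · exact Or.inl hj
    refine Or.inr ?_
    set u : Fin (i + 1) → ℕ := fun l => backBP (S.B ω) 0 (l : ℕ) with hu
    have hc : cond u := by
      constructor
      · rw [hu]
        simp [backBP]
      · rw [hu]
        simpa using hω
    refine Set.mem_iUnion.mpr ⟨u, Set.mem_iUnion.mpr ⟨hc, ?_⟩⟩
    refine Set.mem_iInter.mpr fun l => ?_
    have hne : ∃ m, countTrue (S.B ω ((l : ℕ) : ℤ)) m = backBP (S.B ω) 0 (l : ℕ) + 1 := by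
      by_contra hne
      apply hj
      obtain ⟨L, hL⟩ := eventually_false_of_bounded (countTrue_bounded_of_not_exists hne)
      exact Set.mem_iUnion.mpr ⟨((l : ℕ) : ℤ), ⟨L, hL⟩⟩
    have hstep := step_pattern (b := S.B ω ((l : ℕ) : ℤ)) (v := backBP (S.B ω) 0 (l : ℕ)) hne
    have hdef : backBP (S.B ω) 0 ((l : ℕ) + 1)
        = sInf {m | countTrue (S.B ω ((l : ℕ) : ℤ)) m = backBP (S.B ω) 0 (l : ℕ) + 1}
          - (backBP (S.B ω) 0 (l : ℕ) + 1) := rfl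
    have hcs : u l.castSucc = backBP (S.B ω) 0 (l : ℕ) := by rw [hu]; simp
    have hsc : u l.succ = sInf {m | countTrue (S.B ω ((l : ℕ) : ℤ)) m
        = backBP (S.B ω) 0 (l : ℕ) + 1} - (backBP (S.B ω) 0 (l : ℕ) + 1) := by
      rw [hu]
      simp only [Fin.val_succ]
      exact hdef
    show countTrue (S.B ω ((l : ℕ) : ℤ)) (u l.castSucc + u l.succ + 1) = u l.castSucc + 1
      ∧ S.B ω ((l : ℕ) : ℤ) (u l.castSucc + u l.succ) = true
    rw [hcs, hsc]
    exact hstep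
  have hstep2 : S.μ {ω | h₀ ≤ backBP (S.B ω) 0 i}
      ≤ ∑' u : Fin (i + 1) → ℕ, if cond u then S.μ (TrajSet S u) else 0 := by
    calc S.μ {ω | h₀ ≤ backBP (S.B ω) 0 i}
        ≤ S.μ Junk + S.μ (⋃ u : Fin (i + 1) → ℕ, ⋃ (_ : cond u), TrajSet S u) :=
          le_trans (measure_mono hcover) (measure_union_le _ _)
      _ = S.μ (⋃ u : Fin (i + 1) → ℕ, ⋃ (_ : cond u), TrajSet S u) := by
          rw [hJunk0, zero_add]
      _ ≤ ∑' u : Fin (i + 1) → ℕ, S.μ (⋃ (_ : cond u), TrajSet S u) := measure_iUnion_le _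
      _ = ∑' u : Fin (i + 1) → ℕ, if cond u then S.μ (TrajSet S u) else 0 := by
          refine tsum_congr fun u => ?_
          rw [Set.iUnion_eq_if]
          by_cases hc : cond u
          · rw [if_pos hc, if_pos hc]
          · rw [if_neg hc, if_neg hc, measure_empty]
  have hstep3 : (∑' u : Fin (i + 1) → ℕ, if cond u then S.μ (TrajSet S u) else 0)
      ≤ ∫⁻ ω, ∑' u : Fin (i + 1) → ℕ,
          (if cond u then WtP S ω i 0 u else 0) ∂S.μ := by
    rw [lintegral_tsum]
    · refine ENNReal.tsum_le_tsum fun u => ?_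
      by_cases hc : cond u
      · rw [if_pos hc]
        refine le_trans (mu_traj S u) ?_
        refine le_of_eq (lintegral_congr fun ω => ?_)
        rw [if_pos hc, WtP_zero]
      · rw [if_neg hc]
        exact zero_le
    · intro u
      by_cases hc : cond u
      · refine Measurable.aemeasurable ?_
        have : (fun ω => if cond u then WtP S ω i 0 u else 0)
            = fun ω => WtP S ω i 0 u := by
          funext ω; rw [if_pos hc]
        rw [this]
        unfold WtP
        exact Finset.measurable_prod _ fun l _ => meas_G S _ _ _
      · refine Measurable.aemeasurable ?_
        have : (fun ω => if cond u then WtP S ω i 0 u else 0) = fun _ => 0 := by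
          funext ω; rw [if_neg hc]
        rw [this]
        exact measurable_const
  have hae : ∀ᵐ ω ∂S.μ, (∑' u : Fin (i + 1) → ℕ,
      (if cond u then WtP S ω i 0 u else 0)) ≤ 2 ^ (S.M + 2) * (q⁻¹) ^ h₀ := by
    filter_upwards [S.A1] with ω hfair
    have hterm : ∀ u : Fin (i + 1) → ℕ, (if cond u then WtP S ω i 0 u else 0)
        ≤ (q⁻¹) ^ h₀ * (if u 0 = 0 then q ^ (u (Fin.last i)) * WtP S ω i 0 u else 0) := by
      intro u
      by_cases hc : cond u
      · rw [if_pos hc, if_pos hc.1]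
        have hsplit : q ^ (u (Fin.last i)) = q ^ h₀ * q ^ (u (Fin.last i) - h₀) := by
          rw [← pow_add]
          congr 1
          omega
        have h1 : (1 : ℝ≥0∞) ≤ (q⁻¹) ^ h₀ * q ^ (u (Fin.last i)) := by
          rw [hsplit, ← mul_assoc, ← mul_pow, ENNReal.inv_mul_cancel hq0 hqt, one_pow,
            one_mul]
          exact one_le_pow_of_one_le' hq1 _
        calc WtP S ω i 0 u = 1 * WtP S ω i 0 u := (one_mul _).symm
          _ ≤ ((q⁻¹) ^ h₀ * q ^ (u (Fin.last i))) * WtP S ω i 0 u :=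
            mul_le_mul_left h1 _
          _ = (q⁻¹) ^ h₀ * (q ^ (u (Fin.last i)) * WtP S ω i 0 u) := by ring
      · rw [if_neg hc]
        exact zero_le
    calc (∑' u : Fin (i + 1) → ℕ, (if cond u then WtP S ω i 0 u else 0))
        ≤ ∑' u : Fin (i + 1) → ℕ, (q⁻¹) ^ h₀ *
            (if u 0 = 0 then q ^ (u (Fin.last i)) * WtP S ω i 0 u else 0) :=
          ENNReal.tsum_le_tsum hterm
      _ = (q⁻¹) ^ h₀ * ∑' u : Fin (i + 1) → ℕ,
            (if u 0 = 0 then q ^ (u (Fin.last i)) * WtP S ω i 0 u else 0) :=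
          ENNReal.tsum_mul_left
      _ ≤ (q⁻¹) ^ h₀ * ((∏ j ∈ Finset.range i, (pseq k j) ^ (S.M + 1)) *
            (pseq k i) ^ (0 + 1)) := by
          refine mul_le_mul_right ?_ _
          exact PW S ω hfair k hk i hik 0 0
      _ ≤ (q⁻¹) ^ h₀ * (2 ^ (S.M + 1) * 2) := by
          refine mul_le_mul_right ?_ _
          refine mul_le_mul' (prod_pseq_pow_le k hk i hik S.M) ?_
          rw [pow_one]
          exact pseq_le_two k i hik hk
      _ = 2 ^ (S.M + 2) * (q⁻¹) ^ h₀ := by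
          rw [pow_succ]
          ring
  calc S.μ {ω | h₀ ≤ backBP (S.B ω) 0 i}
      ≤ ∫⁻ ω, ∑' u : Fin (i + 1) → ℕ, (if cond u then WtP S ω i 0 u else 0) ∂S.μ :=
        le_trans hstep2 hstep3
    _ ≤ ∫⁻ _, 2 ^ (S.M + 2) * (q⁻¹) ^ h₀ ∂S.μ := lintegral_mono_ae hae
    _ = 2 ^ (S.M + 2) * (q⁻¹) ^ h₀ := by rw [lintegral_const, measure_univ, mul_one]

end ERWAux

namespace ERWAux
open MeasureTheory ProbabilityTheory

variable (S : ERWSetup)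

lemma key_bound (γ : ℝ) (hγ0 : 0 < γ) (hγ : γ < 1/2) (e : ℝ) (n : ℕ) (hn : 1 ≤ n) :
    (S.μ {ω | (n : ℝ) / 5 <
        ∑ i ∈ Finset.range ⌊(n : ℝ) ^ γ⌋₊, (backBP (S.B ω) 0 i : ℝ)}).toReal /
      (n : ℝ) ^ e
    ≤ (2:ℝ) ^ (S.M + 2) * ((n:ℝ) ^ (γ - e) *
        Real.exp (-(1/15) * (n:ℝ) ^ (1 - 2*γ))) := by
  haveI := S.isProb
  have hnR : (1:ℝ) ≤ (n:ℝ) := by exact_mod_cast hn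
  have hnpos : (0:ℝ) < (n:ℝ) := by linarith
  set k := ⌊(n : ℝ) ^ γ⌋₊ with hkdef
  have hk1 : 1 ≤ k := by
    refine Nat.le_floor ?_
    rw [Nat.cast_one]
    calc (1:ℝ) = 1 ^ γ := (Real.one_rpow γ).symm
      _ ≤ (n:ℝ) ^ γ := Real.rpow_le_rpow (by norm_num) hnR (le_of_lt hγ0)
  have hkpos : (0:ℝ) < (k:ℝ) := by exact_mod_cast hk1
  have hkle : (k:ℝ) ≤ (n:ℝ) ^ γ := Nat.floor_le (Real.rpow_nonneg (by positivity) γ)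
  set h₀ := ⌊(n:ℝ)/(5*(k:ℝ))⌋₊ + 1 with hh₀
  -- covering by levels
  have hsub : {ω | (n : ℝ) / 5 < ∑ i ∈ Finset.range k, (backBP (S.B ω) 0 i : ℝ)}
      ⊆ ⋃ i ∈ Finset.range k, {ω | h₀ ≤ backBP (S.B ω) 0 i} := by
    intro ω hω
    by_contra hno
    simp only [Set.mem_iUnion, not_exists] at hno
    have hbound : ∀ i ∈ Finset.range k, (backBP (S.B ω) 0 i : ℝ) ≤ (n:ℝ)/(5*(k:ℝ)) := by
      intro i hi
      have h1 : ¬ h₀ ≤ backBP (S.B ω) 0 i := by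
        intro hc
        exact hno i hi hc
      have h2 : backBP (S.B ω) 0 i ≤ ⌊(n:ℝ)/(5*(k:ℝ))⌋₊ := by omega
      calc (backBP (S.B ω) 0 i : ℝ) ≤ (⌊(n:ℝ)/(5*(k:ℝ))⌋₊ : ℝ) := by exact_mod_cast h2
        _ ≤ (n:ℝ)/(5*(k:ℝ)) := Nat.floor_le (by positivity)
    have hsum : ∑ i ∈ Finset.range k, (backBP (S.B ω) 0 i : ℝ)
        ≤ (k:ℝ) * ((n:ℝ)/(5*(k:ℝ))) := by
      calc ∑ i ∈ Finset.range k, (backBP (S.B ω) 0 i : ℝ)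
          ≤ ∑ _i ∈ Finset.range k, (n:ℝ)/(5*(k:ℝ)) := Finset.sum_le_sum hbound
        _ = (k:ℝ) * ((n:ℝ)/(5*(k:ℝ))) := by
            rw [Finset.sum_const, Finset.card_range, nsmul_eq_mul]
    have heq : (k:ℝ) * ((n:ℝ)/(5*(k:ℝ))) = (n:ℝ)/5 := by
      field_simp
    rw [heq] at hsum
    have := Set.mem_setOf_eq ▸ hω
    linarith
  -- measure bound
  have hμ : S.μ {ω | (n : ℝ) / 5 < ∑ i ∈ Finset.range k, (backBP (S.B ω) 0 i : ℝ)}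
      ≤ (k : ℝ≥0∞) * (2 ^ (S.M + 2) * ((pseq k 0)⁻¹) ^ h₀) := by
    refine le_trans (measure_mono hsub) (le_trans (measure_biUnion_finset_le _ _) ?_)
    calc ∑ i ∈ Finset.range k, S.μ {ω | h₀ ≤ backBP (S.B ω) 0 i}
        ≤ ∑ _i ∈ Finset.range k, 2 ^ (S.M + 2) * ((pseq k 0)⁻¹) ^ h₀ := by
          refine Finset.sum_le_sum fun i hi => ?_
          exact level_bound S k hk1 i (le_of_lt (Finset.mem_range.mp hi)) h₀
      _ = (k : ℝ≥0∞) * (2 ^ (S.M + 2) * ((pseq k 0)⁻¹) ^ h₀) := by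
          rw [Finset.sum_const, Finset.card_range, nsmul_eq_mul]
  -- real form
  set r : ℝ := (2*(k:ℝ))/(2*(k:ℝ)+1) with hrdef
  have hr0 : 0 ≤ r := by positivity
  have hrinv : ((pseq k 0)⁻¹).toReal = r := by
    rw [ENNReal.toReal_inv]
    have h1 : pseq k 0 = ((qgen (2*k) : ℝ≥0) : ℝ≥0∞) := by
      rw [pseq, Nat.sub_zero]
    rw [h1, ENNReal.coe_toReal, hrdef]
    rw [show ((qgen (2*k) : ℝ≥0) : ℝ) = ((2*(k:ℝ)) + 1)/(2*(k:ℝ)) by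
      rw [qgen_coe]; push_cast; ring]
    rw [inv_div]
  have hfin : (k : ℝ≥0∞) * (2 ^ (S.M + 2) * ((pseq k 0)⁻¹) ^ h₀) ≠ ∞ := by
    refine ENNReal.mul_ne_top (ENNReal.natCast_ne_top k) ?_
    refine ENNReal.mul_ne_top ?_ ?_
    · exact ENNReal.pow_ne_top (by norm_num)
    · refine ENNReal.pow_ne_top ?_
      refine ENNReal.inv_ne_top.mpr ?_
      intro hc
      have := one_le_pseq k 0 (by omega) hk1
      rw [hc] at this
      exact absurd this (by norm_num)
  have htoReal : (S.μ {ω | (n : ℝ) / 5 <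
      ∑ i ∈ Finset.range k, (backBP (S.B ω) 0 i : ℝ)}).toReal
      ≤ (k:ℝ) * ((2:ℝ) ^ (S.M + 2) * r ^ h₀) := by
    refine le_trans (ENNReal.toReal_mono hfin hμ) ?_
    rw [ENNReal.toReal_mul, ENNReal.toReal_mul, ENNReal.toReal_pow, ENNReal.toReal_pow,
      hrinv]
    simp
  -- exponential estimate
  have hkR : (1:ℝ) ≤ (k:ℝ) := by exact_mod_cast hk1
  have hrexp : r ^ h₀ ≤ Real.exp (-(1/15) * (n:ℝ) ^ (1 - 2*γ)) := by
    have hstep1 : r ≤ Real.exp (-(1/(2*(k:ℝ)+1))) := by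
      have h1 : r = 1 + (-(1/(2*(k:ℝ)+1))) := by
        rw [hrdef]
        field_simp
        ring
      rw [h1]
      have := Real.add_one_le_exp (-(1/(2*(k:ℝ)+1)))
      linarith
    have hstep2 : r ^ h₀ ≤ Real.exp (-(h₀:ℝ)/(2*(k:ℝ)+1)) := by
      calc r ^ h₀ ≤ (Real.exp (-(1/(2*(k:ℝ)+1)))) ^ h₀ := pow_le_pow_left₀ hr0 hstep1 h₀
        _ = Real.exp ((h₀:ℕ) * (-(1/(2*(k:ℝ)+1)))) := by rw [← Real.exp_nat_mul]
        _ = Real.exp (-(h₀:ℝ)/(2*(k:ℝ)+1)) := by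
            congr 1
            push_cast
            ring
    refine le_trans hstep2 ?_
    rw [Real.exp_le_exp]
    -- need : -(h₀)/(2k+1) ≤ -(1/15) * n^(1-2γ) i.e. (1/15) n^(1-2γ) ≤ h₀/(2k+1)
    have hfl : (n:ℝ)/(5*(k:ℝ)) ≤ (h₀:ℝ) := by
      rw [hh₀]
      push_cast
      exact le_of_lt (Nat.lt_floor_add_one _)
    have hd1 : (n:ℝ)/(5*(k:ℝ))/(2*(k:ℝ)+1) ≤ (h₀:ℝ)/(2*(k:ℝ)+1) := by
      gcongr
    have hA : (n:ℝ)/(5*(k:ℝ))/(2*(k:ℝ)+1) = (n:ℝ)/((5*(k:ℝ))*(2*(k:ℝ)+1)) :=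
      div_div _ _ _
    have hB : (n:ℝ)/(15*(k:ℝ)^2) ≤ (n:ℝ)/((5*(k:ℝ))*(2*(k:ℝ)+1)) := by
      refine div_le_div_of_nonneg_left (le_of_lt hnpos) (by positivity) ?_
      nlinarith [hkR]
    have hk2 : (k:ℝ)^2 ≤ (n:ℝ)^(2*γ) := by
      have h1 : (k:ℝ)^2 ≤ ((n:ℝ)^γ)^2 := by nlinarith [hkle, hkpos]
      have h2 : ((n:ℝ)^γ)^2 = (n:ℝ)^(2*γ) := by
        rw [sq, ← Real.rpow_add hnpos]
        ring_nf
      linarith [h2 ▸ h1]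
    have hC : (1/15) * (n:ℝ)^(1-2*γ) ≤ (n:ℝ)/(15*(k:ℝ)^2) := by
      have hX : (n:ℝ)^(1-2*γ) * (k:ℝ)^2 ≤ (n:ℝ) := by
        calc (n:ℝ)^(1-2*γ) * (k:ℝ)^2 ≤ (n:ℝ)^(1-2*γ) * (n:ℝ)^(2*γ) := by
              refine mul_le_mul_of_nonneg_left hk2 ?_
              positivity
          _ = (n:ℝ) := by
              rw [← Real.rpow_add hnpos]
              norm_num
      calc (1/15) * (n:ℝ)^(1-2*γ) = ((n:ℝ)^(1-2*γ) * (k:ℝ)^2) / (15*(k:ℝ)^2) := by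
            rw [eq_div_iff (by positivity)]
            ring
        _ ≤ (n:ℝ)/(15*(k:ℝ)^2) := by
            gcongr
    have hfinal : (1/15) * (n:ℝ)^(1-2*γ) ≤ (h₀:ℝ)/(2*(k:ℝ)+1) := by linarith
    have hneg := neg_le_neg hfinal
    calc -(h₀:ℝ)/(2*(k:ℝ)+1) = -((h₀:ℝ)/(2*(k:ℝ)+1)) := by ring
      _ ≤ -((1/15) * (n:ℝ)^(1-2*γ)) := hneg
      _ = -(1/15) * (n:ℝ)^(1-2*γ) := by ring
  have hnepos : (0:ℝ) < (n:ℝ)^e := Real.rpow_pos_of_pos hnpos e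
  have h2pos : (0:ℝ) ≤ (2:ℝ)^(S.M+2) := by positivity
  calc (S.μ {ω | (n : ℝ) / 5 <
        ∑ i ∈ Finset.range ⌊(n : ℝ) ^ γ⌋₊, (backBP (S.B ω) 0 i : ℝ)}).toReal / (n : ℝ) ^ e
      ≤ ((k:ℝ) * ((2:ℝ)^(S.M+2) * r^h₀)) / (n:ℝ)^e :=
        (div_le_div_iff_of_pos_right hnepos).mpr htoReal
    _ ≤ (((n:ℝ)^γ) * ((2:ℝ)^(S.M+2) * Real.exp (-(1/15) * (n:ℝ)^(1-2*γ)))) / (n:ℝ)^e := by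
        refine (div_le_div_iff_of_pos_right hnepos).mpr ?_
        refine mul_le_mul hkle (mul_le_mul_of_nonneg_left hrexp h2pos) (by positivity)
          (by positivity)
    _ = (2:ℝ)^(S.M+2) * ((n:ℝ)^(γ-e) * Real.exp (-(1/15)*(n:ℝ)^(1-2*γ))) := by
        rw [Real.rpow_sub hnpos γ e]
        ring

end ERWAux

namespace ERWAux
open MeasureTheory ProbabilityTheory

lemma tendsto_aux (γ e : ℝ) (hγ0 : 0 < γ) (hγ : γ < 1/2) (C : ℝ) :
    Tendsto (fun n : ℕ => C * ((n:ℝ)^(γ - e) * Real.exp (-(1/15) * (n:ℝ)^(1 - 2*γ))))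
      atTop (nhds 0) := by
  have hb : (0:ℝ) < 1 - 2*γ := by linarith
  have h1 : Tendsto (fun n : ℕ => (n:ℝ)^(1-2*γ)) atTop atTop :=
    (tendsto_rpow_atTop hb).comp tendsto_natCast_atTop_atTop
  have h2 := (tendsto_rpow_mul_exp_neg_mul_atTop_nhds_zero ((γ - e)/(1-2*γ)) (1/15)
    (by norm_num)).comp h1
  have heq : ∀ᶠ n : ℕ in atTop, ((n:ℝ)^(1-2*γ))^((γ-e)/(1-2*γ)) *
      Real.exp (-(1/15) * (n:ℝ)^(1-2*γ))
      = (n:ℝ)^(γ-e) * Real.exp (-(1/15) * (n:ℝ)^(1-2*γ)) := by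
    filter_upwards [eventually_ge_atTop 1] with n hn
    have hn0 : (0:ℝ) ≤ (n:ℝ) := Nat.cast_nonneg n
    congr 1
    rw [← Real.rpow_mul hn0]
    congr 1
    field_simp
  have h3 : Tendsto (fun n : ℕ => (n:ℝ)^(γ-e) * Real.exp (-(1/15) * (n:ℝ)^(1-2*γ)))
      atTop (nhds 0) := Tendsto.congr' heq h2
  have h4 := h3.const_mul C
  simpa using h4

end ERWAux


/-- **Equation (4.5).** Under (A1)-(A3) with `δ > 1` and `γ ∈ (0, 1/2)`,
`P_V(Σ_{i=0}^{⌊n^γ⌋-1} V_i > n/5) = o(n^{2γ-(1+δ)/2})` as `n → ∞`. -/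
theorem backBP_partial_sum_small_o (S : ERWSetup) (hδ : 1 < S.delta)
    (γ : ℝ) (hγ0 : 0 < γ) (hγ : γ < 1 / 2) :
    Tendsto (fun n : ℕ =>
        (S.μ {ω | (n : ℝ) / 5 <
          ∑ i ∈ Finset.range ⌊(n : ℝ) ^ γ⌋₊, (backBP (S.B ω) 0 i : ℝ)}).toReal /
          (n : ℝ) ^ (2 * γ - (1 + S.delta) / 2))
      atTop (nhds 0) := by
  have hg := ERWAux.tendsto_aux γ (2 * γ - (1 + S.delta) / 2) hγ0 hγ ((2:ℝ)^(S.M+2))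
  refine tendsto_of_tendsto_of_tendsto_of_le_of_le' tendsto_const_nhds hg ?_ ?_
  · exact Filter.Eventually.of_forall fun n =>
      div_nonneg ENNReal.toReal_nonneg (Real.rpow_nonneg (Nat.cast_nonneg n) _)
  · filter_upwards [eventually_ge_atTop 1] with n hn
    exact ERWAux.key_bound S γ hγ0 hγ (2 * γ - (1 + S.delta) / 2) n hn
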